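/- Let n ≥ 1 and let r₀, …, r_n, r_{n+1} be real numbers. Then there exist a ≠ 0 and b ∈ ℝ such that for all sufficiently large real t, ∏_{i=0}^{n} Γ(t + r_i) = a e^{bt} Γ((n+1)t + r_{n+1}), if and only if there exist u ∈ ℝ and a permutation σ of {0, 1, …, n} such that r_i = u + σ(i)/(n+1) for every i ∈ {0, …, n} and r_{n+1} = (n+1)u. -/

import Mathlib

open Finset

section GammaAuxSection
open Real Set

lemma gaux_convexOn_affine (c d : ℝ) : ConvexOn ℝ (Ioi (0:ℝ)) (fun x => c * x + d) := by
  refine ⟨convex_Ioi _, fun x _ y _ a b _ _ hab => ?_⟩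
  simp only [smul_eq_mul]
  apply le_of_eq
  linear_combination (-d) * hab

lemma gaux_convexOn_comp_affine {f : ℝ → ℝ} (hf : ConvexOn ℝ (Ioi (0:ℝ)) f)
    {c d : ℝ} (hc : 0 < c) (hd : 0 ≤ d) :
    ConvexOn ℝ (Ioi (0:ℝ)) (fun x => f (c * x + d)) := by
  refine ⟨convex_Ioi _, fun x hx y hy a b ha hb hab => ?_⟩
  have hx0 : (0:ℝ) < x := hx
  have hy0 : (0:ℝ) < y := hy
  have hx' : c * x + d ∈ Ioi (0:ℝ) := by simp only [Set.mem_Ioi]; nlinarith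
  have hy' : c * y + d ∈ Ioi (0:ℝ) := by simp only [Set.mem_Ioi]; nlinarith
  have h := hf.2 hx' hy' ha hb hab
  simp only [smul_eq_mul] at h ⊢
  have e : c * (a * x + b * y) + d = a * (c * x + d) + b * (c * y + d) := by
    linear_combination (-d) * hab
  rw [e]
  exact h

lemma gaux_convexOn_sum {ι : Type*} (t : Finset ι) (f : ι → ℝ → ℝ)
    (h : ∀ i ∈ t, ConvexOn ℝ (Ioi (0:ℝ)) (f i)) :
    ConvexOn ℝ (Ioi (0:ℝ)) (fun x => ∑ i ∈ t, f i x) := by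
  classical
  induction t using Finset.induction_on with
  | empty => simpa using convexOn_const (0:ℝ) (convex_Ioi 0)
  | @insert i t0 hnot ih =>
    simp only [Finset.sum_insert hnot]
    exact (h i (mem_insert_self _ _)).add (ih fun j hj => h j (mem_insert_of_mem hj))

lemma gauss_mult (m : ℕ) (hm : 1 ≤ m) {x : ℝ} (hx : 0 < x) :
    ∏ k ∈ range m, Real.Gamma ((x + k) / m)
      = (∏ k ∈ range m, Real.Gamma ((1 + k) / m)) * (m:ℝ) ^ (1 - x) * Real.Gamma x := by
  have hm0 : (0:ℝ) < m := by exact_mod_cast hm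
  set C0 : ℝ := ∏ k ∈ range m, Real.Gamma ((1 + k) / m) with hC0
  have hC0pos : 0 < C0 := Finset.prod_pos fun k _ => Real.Gamma_pos_of_pos (by positivity)
  set F : ℝ → ℝ :=
    fun y => (∏ k ∈ range m, Real.Gamma ((y + k) / m)) * (m:ℝ) ^ (y - 1) / C0 with hF
  have hprodpos : ∀ {y : ℝ}, 0 < y → 0 < ∏ k ∈ range m, Real.Gamma ((y + k) / m) := by
    intro y hy
    refine Finset.prod_pos fun k _ => Real.Gamma_pos_of_pos ?_
    have : (0:ℝ) ≤ (k:ℝ) := Nat.cast_nonneg k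
    apply div_pos (by linarith) hm0
  have hFpos : ∀ {y : ℝ}, 0 < y → 0 < F y := by
    intro y hy
    have h1 := hprodpos hy
    have h2 : 0 < (m:ℝ) ^ (y - 1) := Real.rpow_pos_of_pos hm0 _
    rw [hF]
    positivity
  have hkey : ∀ {y : ℝ}, 0 < y → F (y + 1) = y * F y := by
    intro y hy
    set f : ℕ → ℝ := fun k => Real.Gamma ((y + k) / m) with hf
    have hf0 : (0:ℝ) < f 0 := by
      apply Real.Gamma_pos_of_pos
      simp only [hf, Nat.cast_zero, add_zero]
      exact div_pos hy hm0
    have step1 : ∏ k ∈ range m, Real.Gamma ((y + 1 + k) / m) = ∏ k ∈ range m, f (k + 1) :=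
      prod_congr rfl fun k _ => by simp only [hf]; congr 1; push_cast; ring
    have step2 : (∏ k ∈ range m, f (k + 1)) * f 0 = (∏ k ∈ range m, f k) * f m := by
      rw [← prod_range_succ' f m, prod_range_succ]
    have hfm : f m = (y / m) * f 0 := by
      simp only [hf, Nat.cast_zero, add_zero]
      have h1 : (y + (m:ℝ)) / m = y / m + 1 := by field_simp
      rw [h1, Real.Gamma_add_one (by positivity)]
    have step3 : ∏ k ∈ range m, f (k + 1) = (∏ k ∈ range m, f k) * (y / m) :=
      mul_right_cancel₀ hf0.ne' (by rw [step2, hfm]; ring)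
    have hrp : (m:ℝ) ^ (y + 1 - 1) = (m:ℝ) ^ (y - 1) * m := by
      have e : y + 1 - 1 = (y - 1) + 1 := by ring
      rw [e, Real.rpow_add hm0, Real.rpow_one]
    rw [hF]
    simp only []
    rw [step1, step3, hrp]
    field_simp
    ring
  have hF1 : F 1 = 1 := by
    rw [hF]
    simp only [sub_self, Real.rpow_zero, mul_one]
    exact div_self hC0pos.ne'
  have hconv : ConvexOn ℝ (Ioi 0) (Real.log ∘ F) := by
    have hsum : ConvexOn ℝ (Ioi (0:ℝ))
        (fun yy => ∑ k ∈ range m, Real.log (Real.Gamma ((yy + k) / m))) := by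
      apply gaux_convexOn_sum
      intro k _
      have h1 : (0:ℝ) < 1 / m := by positivity
      have h2 : (0:ℝ) ≤ (k:ℝ) / m := by positivity
      have h3 := gaux_convexOn_comp_affine Real.convexOn_log_Gamma h1 h2
      have e : (fun yy : ℝ => Real.log (Real.Gamma ((yy + k) / m)))
          = fun yy => (Real.log ∘ Real.Gamma) (1 / (m:ℝ) * yy + (k:ℝ) / m) := by
        funext yy
        simp only [Function.comp_apply]
        congr 1
        field_simp
      rw [e]
      exact h3
    have haff := gaux_convexOn_affine (Real.log m) (-(Real.log m) - Real.log C0)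
    refine (hsum.add haff).congr ?_
    intro y hy
    have hy0 : (0:ℝ) < y := hy
    have hprod := hprodpos hy0
    have hrpow : (0:ℝ) < (m:ℝ) ^ (y - 1) := Real.rpow_pos_of_pos hm0 _
    have hne : ∀ k ∈ range m, Real.Gamma ((y + k) / m) ≠ 0 := fun k _ =>
      (Real.Gamma_pos_of_pos (div_pos (by have := Nat.cast_nonneg (α := ℝ) k; linarith) hm0)).ne'
    simp only [Function.comp_apply, Pi.add_apply, hF]
    rw [Real.log_div (by positivity) hC0pos.ne', Real.log_mul hprod.ne' hrpow.ne',
      Real.log_prod hne, Real.log_rpow hm0]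
    ring
  have heq := Real.eq_Gamma_of_log_convex hconv (fun {y} hy => hkey hy) (fun {y} hy => hFpos hy) hF1
  have h := heq (Set.mem_Ioi.mpr hx)
  have hone : (m:ℝ) ^ (x - 1) * (m:ℝ) ^ (1 - x) = 1 := by
    rw [← Real.rpow_add hm0]
    norm_num
  have h2 : (∏ k ∈ range m, Real.Gamma ((x + k) / m)) * (m:ℝ) ^ (x - 1)
      = Real.Gamma x * C0 := by
    rw [hF] at h
    simp only [] at h
    field_simp at h
    linarith [h]
  calc ∏ k ∈ range m, Real.Gamma ((x + k) / m)
      = ((∏ k ∈ range m, Real.Gamma ((x + k) / m)) * (m:ℝ) ^ (x - 1)) * (m:ℝ) ^ (1 - x) := by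
        rw [mul_assoc, hone, mul_one]
    _ = (Real.Gamma x * C0) * (m:ℝ) ^ (1 - x) := by rw [h2]
    _ = C0 * (m:ℝ) ^ (1 - x) * Real.Gamma x := by ring

lemma gaux_Gamma_add_nat {x : ℝ} (hx : 0 < x) (m : ℕ) :
    Real.Gamma (x + m) = (∏ k ∈ range m, (x + k)) * Real.Gamma x := by
  induction m with
  | zero => simp
  | succ m ih =>
    have hxm : x + (m:ℝ) ≠ 0 := by positivity
    have h : x + ((m:ℕ)+1 : ℕ) = (x + m) + 1 := by push_cast; ring
    rw [h, Real.Gamma_add_one hxm, ih, prod_range_succ]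
    ring


end GammaAuxSection

/-- Examples 5.8.1 / 5.8.2: the Gamma identity
`∏_{i=0}^n Γ(t + rᵢ) = a e^{bt} Γ((n+1)t + s)` holds (for large `t`) iff the
vector `(r₀,…,r_n; s)` is a Gauss multiplication vector, i.e.
`rᵢ = u + σ(i)/(n+1)` for a permutation `σ` and `s = (n+1)u`. -/
theorem gamma_identity_gauss_multiplication (n : ℕ) (hn : 1 ≤ n)
    (r : Fin (n + 1) → ℝ) (s : ℝ) :
    (∃ a b : ℝ, a ≠ 0 ∧ ∃ T : ℝ, ∀ t : ℝ, T ≤ t →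
      ∏ i : Fin (n + 1), Real.Gamma (t + r i)
        = a * Real.exp (b * t) * Real.Gamma ((n + 1) * t + s)) ↔
    (∃ u : ℝ, ∃ σ : Equiv.Perm (Fin (n + 1)),
      (∀ i, r i = u + ((σ i : ℕ) : ℝ) / (n + 1)) ∧ s = (n + 1) * u) := by
  classical
  have hM0 : (0:ℝ) < (n:ℝ) + 1 := by positivity
  set M : ℝ := (n:ℝ) + 1 with hMdef
  have hcast : ((n+1:ℕ):ℝ) = M := by push_cast; rw [hMdef]
  constructor
  · rintro ⟨a, b, ha, T, hT⟩
    set T0 : ℝ := max T (1 + |s| + ∑ i : Fin (n+1), |r i|) with hT0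
    have habs : ∀ i : Fin (n+1), |r i| ≤ ∑ j : Fin (n+1), |r j| :=
      fun i => Finset.single_le_sum (fun j _ => abs_nonneg (r j)) (mem_univ i)
    have hposl : ∀ t : ℝ, T0 ≤ t → (∀ i : Fin (n+1), 0 < t + r i) ∧ 0 < M * t + s := by
      intro t ht
      have h1 : 1 + |s| + ∑ j : Fin (n+1), |r j| ≤ t := le_trans (le_max_right _ _) ht
      have hsum0 : 0 ≤ ∑ j : Fin (n+1), |r j| := Finset.sum_nonneg fun j _ => abs_nonneg _
      have hs0 := abs_nonneg s
      constructor
      · intro i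
        have h2 := habs i
        have h3 := neg_abs_le (r i)
        linarith
      · have htpos : (0:ℝ) < t := by linarith
        have h4 : t ≤ M * t := by nlinarith
        have h5 := neg_abs_le s
        linarith
    have key : ∀ t : ℝ, T0 ≤ t →
        ∏ i : Fin (n+1), (t + r i) = Real.exp b * ∏ k ∈ range (n+1), (M * t + s + k) := by
      intro t ht
      obtain ⟨hri, hMs⟩ := hposl t ht
      have ht' : T ≤ t := le_trans (le_max_left _ _) ht
      have h1 := hT t ht'
      have h2 := hT (t+1) (by linarith)
      rw [hMdef] at h1 h2 ⊢
      have e1 : ∏ i : Fin (n+1), Real.Gamma (t + 1 + r i)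
          = (∏ i : Fin (n+1), (t + r i)) * ∏ i : Fin (n+1), Real.Gamma (t + r i) := by
        rw [← prod_mul_distrib]
        refine Finset.prod_congr rfl fun i _ => ?_
        have e : t + 1 + r i = (t + r i) + 1 := by ring
        rw [e, Real.Gamma_add_one (hri i).ne']
      have e2 : ((n:ℝ) + 1) * (t+1) + s = (((n:ℝ)+1) * t + s) + ((n+1 : ℕ):ℝ) := by
        push_cast; ring
      have hMs' : 0 < ((n:ℝ)+1) * t + s := by rw [← hMdef]; exact hMs
      have e3 : Real.Gamma (((n:ℝ)+1) * (t+1) + s)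
          = (∏ k ∈ range (n+1), (((n:ℝ)+1) * t + s + k)) * Real.Gamma (((n:ℝ)+1) * t + s) := by
        rw [e2, gaux_Gamma_add_nat hMs' (n+1)]
      have hG : Real.Gamma (((n:ℝ)+1) * t + s) ≠ 0 := (Real.Gamma_pos_of_pos hMs').ne'
      have hne : a * Real.exp (b * t) * Real.Gamma (((n:ℝ)+1) * t + s) ≠ 0 :=
        mul_ne_zero (mul_ne_zero ha (Real.exp_ne_zero _)) hG
      rw [e1, h1, e3] at h2
      apply mul_right_cancel₀ hne
      rw [h2]
      have e4 : b * (t + 1) = b * t + b := by ring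
      rw [e4, Real.exp_add]
      ring
    set ee : Fin (n+1) → ℝ := fun k => s / M + ((k:ℕ):ℝ) / M with hee
    set P : Polynomial ℝ := ∏ i : Fin (n+1), (Polynomial.X - Polynomial.C (-(r i))) with hP
    set Q : Polynomial ℝ := ∏ k : Fin (n+1), (Polynomial.X - Polynomial.C (-(ee k))) with hQ
    have hfac : ∀ (t : ℝ) (k : Fin (n+1)), M * t + s + ((k:ℕ):ℝ) = M * (t + ee k) := by
      intro t k
      rw [hee]
      field_simp
      ring
    have hPQ : P = Polynomial.C (Real.exp b * M^(n+1)) * Q := by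
      apply Polynomial.eq_of_infinite_eval_eq
      refine (Set.Ici_infinite T0).mono ?_
      intro t ht
      simp only [Set.mem_setOf_eq, hP, hQ]
      rw [Polynomial.eval_mul, Polynomial.eval_C, Polynomial.eval_prod, Polynomial.eval_prod]
      simp only [Polynomial.eval_sub, Polynomial.eval_X, Polynomial.eval_C, sub_neg_eq_add]
      rw [key t ht, ← Fin.prod_univ_eq_prod_range (fun k => M * t + s + (k:ℝ)) (n+1)]
      have e5 : ∏ k : Fin (n+1), (M * t + s + ((k:ℕ):ℝ)) = M^(n+1) * ∏ k : Fin (n+1), (t + ee k) := by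
        calc ∏ k : Fin (n+1), (M * t + s + ((k:ℕ):ℝ))
            = ∏ k : Fin (n+1), (M * (t + ee k)) := Finset.prod_congr rfl fun k _ => hfac t k
          _ = (∏ _k : Fin (n+1), M) * ∏ k : Fin (n+1), (t + ee k) := by
              rw [← prod_mul_distrib]
          _ = M^(n+1) * ∏ k : Fin (n+1), (t + ee k) := by
              rw [Finset.prod_const, Finset.card_univ, Fintype.card_fin]
      rw [e5]
      ring
    have hPm : P.Monic := Polynomial.monic_prod_of_monic _ _ fun i _ => Polynomial.monic_X_sub_C _
    have hQm : Q.Monic := Polynomial.monic_prod_of_monic _ _ fun i _ => Polynomial.monic_X_sub_C _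
    have hc1 : Real.exp b * M^(n+1) = 1 := by
      have hlc := congrArg Polynomial.leadingCoeff hPQ
      rw [hPm.leadingCoeff, Polynomial.leadingCoeff_mul, Polynomial.leadingCoeff_C,
        hQm.leadingCoeff, mul_one] at hlc
      exact hlc.symm
    have hPQ' : P = Q := by rw [hPQ, hc1, map_one, one_mul]
    have hProots : P.roots = Multiset.map (fun i => -(r i)) Finset.univ.val := by
      have hrepr : P = (Multiset.map (fun z : ℝ => Polynomial.X - Polynomial.C z)
          (Multiset.map (fun i => -(r i)) Finset.univ.val)).prod := by
        rw [Multiset.map_map, hP, Finset.prod_eq_multiset_prod]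
        rfl
      rw [hrepr, Polynomial.roots_multiset_prod_X_sub_C]
    have hQroots : Q.roots = Multiset.map (fun k => -(ee k)) Finset.univ.val := by
      have hrepr : Q = (Multiset.map (fun z : ℝ => Polynomial.X - Polynomial.C z)
          (Multiset.map (fun k => -(ee k)) Finset.univ.val)).prod := by
        rw [Multiset.map_map, hQ, Finset.prod_eq_multiset_prod]
        rfl
      rw [hrepr, Polynomial.roots_multiset_prod_X_sub_C]
    have hroots : Multiset.map (fun i => -(r i)) Finset.univ.val
        = Multiset.map (fun k => -(ee k)) Finset.univ.val := by
      rw [← hProots, ← hQroots, hPQ']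
    have hmaps : Multiset.map r Finset.univ.val = Multiset.map ee Finset.univ.val := by
      have h1 : Multiset.map (fun z : ℝ => -z) (Multiset.map (fun i => -(r i)) Finset.univ.val)
          = Multiset.map r Finset.univ.val := by
        rw [Multiset.map_map]
        exact Multiset.map_congr rfl fun x _ => neg_neg (r x)
      have h2 : Multiset.map (fun z : ℝ => -z) (Multiset.map (fun k => -(ee k)) Finset.univ.val)
          = Multiset.map ee Finset.univ.val := by
        rw [Multiset.map_map]
        exact Multiset.map_congr rfl fun x _ => neg_neg (ee x)
      rw [← h1, ← h2, hroots]
    have hee_inj : Function.Injective ee := by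
      intro i j hij
      simp only [hee] at hij
      field_simp at hij
      exact Fin.ext (by exact_mod_cast add_left_cancel hij)
    have hexists : ∀ i, ∃ k, ee k = r i := by
      intro i
      have hmem : r i ∈ Multiset.map ee Finset.univ.val := by
        rw [← hmaps]
        exact Multiset.mem_map_of_mem _ (Finset.mem_val.mpr (Finset.mem_univ i))
      obtain ⟨k, _, hk⟩ := Multiset.mem_map.mp hmem
      exact ⟨k, hk⟩
    choose g hg using hexists
    have hrinj : Function.Injective r := by
      intro i j hij
      by_contra hne
      have hcount1 : Multiset.count (r i) (Multiset.map ee Finset.univ.val) = 1 := by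
        rw [← hg i, Multiset.count_map_eq_count' ee _ hee_inj]
        exact Multiset.count_eq_one_of_mem Finset.univ.nodup
          (Finset.mem_val.mpr (Finset.mem_univ _))
      have hcount2 : 2 ≤ Multiset.count (r i) (Multiset.map r Finset.univ.val) := by
        rw [Multiset.count_map]
        have hle : ({i, j} : Finset (Fin (n+1))).val ≤ Finset.univ.val :=
          Finset.val_le_iff.mpr (Finset.subset_univ _)
        have hfil : Multiset.filter (fun a => r i = r a) ({i, j} : Finset (Fin (n+1))).val
            = ({i, j} : Finset (Fin (n+1))).val := by
          rw [Multiset.filter_eq_self]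
          intro a ha
          rcases Finset.mem_insert.mp (Finset.mem_val.mp ha) with h | h
          · rw [h]
          · rw [Finset.mem_singleton.mp h]; exact hij
        have hcard : ({i, j} : Finset (Fin (n+1))).val.card = 2 := Finset.card_pair hne
        calc (2:ℕ) = ({i, j} : Finset (Fin (n+1))).val.card := hcard.symm
          _ = (Multiset.filter (fun a => r i = r a) ({i, j} : Finset (Fin (n+1))).val).card := by
              rw [hfil]
          _ ≤ (Multiset.filter (fun a => r i = r a) Finset.univ.val).card :=
              Multiset.card_le_card (Multiset.filter_le_filter _ hle)
      rw [hmaps] at hcount2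
      omega
    have hginj : Function.Injective g := by
      intro i j hij
      apply hrinj
      rw [← hg i, ← hg j, hij]
    have hgbij : Function.Bijective g :=
      (Fintype.bijective_iff_injective_and_card g).mpr ⟨hginj, rfl⟩
    refine ⟨s / M, Equiv.ofBijective g hgbij, ?_, ?_⟩
    · intro i
      have := (hg i).symm
      rw [hee] at this
      rw [this]
      rfl
    · rw [hMdef]
      field_simp
  · rintro ⟨u, σ, hr, hs⟩
    set C0 : ℝ := ∏ k ∈ range (n+1), Real.Gamma ((1 + k) / M) with hC0
    have hC0pos : 0 < C0 := by
      rw [hC0]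
      exact Finset.prod_pos fun k _ => Real.Gamma_pos_of_pos (by positivity)
    refine ⟨C0 * M ^ (1 - M * u), -(M * Real.log M), ?_, 1 + |u|, ?_⟩
    · exact mul_ne_zero hC0pos.ne' (Real.rpow_pos_of_pos hM0 _).ne'
    · intro t ht
      have hu : 0 < t + u := by
        have h1 := neg_abs_le u
        linarith
      have hx : 0 < M * (t + u) := by positivity
      have hg := gauss_mult (n+1) (by omega) hx
      rw [hcast] at hg
      rw [← hC0] at hg
      have lhs_eq : ∏ i : Fin (n+1), Real.Gamma (t + r i)
          = ∏ k ∈ range (n+1), Real.Gamma ((M * (t + u) + k) / M) := by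
        have e1 : ∀ i : Fin (n+1), Real.Gamma (t + r i)
            = Real.Gamma (t + u + ((σ i : ℕ):ℝ) / M) := by
          intro i
          rw [hr i, hMdef]
          ring_nf
        calc ∏ i : Fin (n+1), Real.Gamma (t + r i)
            = ∏ i : Fin (n+1), Real.Gamma (t + u + ((σ i : ℕ):ℝ) / M) :=
              Finset.prod_congr rfl fun i _ => e1 i
          _ = ∏ i : Fin (n+1), Real.Gamma (t + u + ((i : ℕ):ℝ) / M) :=
              Equiv.prod_comp σ (fun i : Fin (n+1) => Real.Gamma (t + u + ((i : ℕ):ℝ) / M))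
          _ = ∏ k ∈ range (n+1), Real.Gamma (t + u + (k:ℝ) / M) :=
              Fin.prod_univ_eq_prod_range (fun k => Real.Gamma (t + u + (k:ℝ) / M)) (n+1)
          _ = ∏ k ∈ range (n+1), Real.Gamma ((M * (t + u) + k) / M) := by
              refine Finset.prod_congr rfl fun k _ => ?_
              congr 1
              rw [add_div, mul_div_cancel_left₀ _ hM0.ne']
      rw [lhs_eq, hg]
      have harg : M * (t + u) = (↑n + 1) * t + s := by
        rw [hs, hMdef]; ring
      rw [harg]
      have hrpow : M ^ (1 - ((↑n + 1) * t + s)) = M ^ (1 - M * u) * Real.exp (-(M * Real.log M) * t) := by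
        have e6 : 1 - ((↑n + 1) * t + s) = (1 - M * u) + (-(M * t)) := by
          rw [hs, hMdef]; ring
        have e7 : M ^ (-(M * t)) = Real.exp (-(M * Real.log M) * t) := by
          rw [Real.rpow_def_of_pos hM0]
          congr 1
          ring
        rw [e6, Real.rpow_add hM0, e7]
      rw [hrpow]
      ring
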